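/- Consider an N-agent system on finite spaces X, U with bounded Lipschitz reward r: |r(x,u,μ,ν)| ≤ M_R and |r(x,u,μ₁,ν₁) − r(x,u,μ₂,ν₂)| ≤ L_R(|μ₁−μ₂|₁ + |ν₁−ν₂|₁). Given joint state x_t^N with empirical distribution μ_t^N, agents independently sample u_t^i ∼ π_t(x_t^i, μ_t^N); let ν_t^N be the empirical action distribution. With r^MF(μ,π) = Σ_x Σ_u r(x,u,μ,ν^MF(μ,π)) π(x,μ)(u) μ(x), one has E| (1/N) Σ_{i=1}^N r(x_t^i, u_t^i, μ_t^N, ν_t^N) − r^MF(μ_t^N, π_t) | ≤ M_R/√N + L_R √(|U|)/√N. -/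

import Mathlib

open Finset

def IsPmf {X : Type*} [Fintype X] (μ : X → ℝ) : Prop :=
  (∀ x, 0 ≤ μ x) ∧ ∑ x, μ x = 1

noncomputable def l1 {X : Type*} [Fintype X] (f : X → ℝ) : ℝ := ∑ x, |f x|

/-- Empirical distribution of a configuration of `N` agents. -/
noncomputable def emp {X : Type*} [Fintype X] [DecidableEq X] {N : ℕ}
    (s : Fin N → X) : X → ℝ :=
  fun x => (∑ i, if s i = x then (1 : ℝ) else 0) / N

lemma exp_abs_le_sqrt {ι : Type*} [Fintype ι] (w f : ι → ℝ)
    (hw : ∀ i, 0 ≤ w i) (hw1 : ∑ i, w i = 1) :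
    ∑ i, w i * |f i| ≤ Real.sqrt (∑ i, w i * f i ^ 2) := by
  have hS : 0 ≤ ∑ i, w i * |f i| :=
    Finset.sum_nonneg fun i _ => mul_nonneg (hw i) (abs_nonneg _)
  have key : (∑ i, w i * |f i|) ^ 2 ≤ ∑ i, w i * f i ^ 2 := by
    have h := Finset.sum_mul_sq_le_sq_mul_sq univ (fun i => Real.sqrt (w i))
        (fun i => Real.sqrt (w i) * |f i|)
    calc (∑ i, w i * |f i|) ^ 2
        = (∑ i, Real.sqrt (w i) * (Real.sqrt (w i) * |f i|)) ^ 2 := by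
          congr 1
          exact Finset.sum_congr rfl fun i _ => by
            rw [← mul_assoc, Real.mul_self_sqrt (hw i)]
      _ ≤ (∑ i, Real.sqrt (w i) ^ 2) * ∑ i, (Real.sqrt (w i) * |f i|) ^ 2 := h
      _ = ∑ i, w i * f i ^ 2 := by
          rw [show (∑ i, Real.sqrt (w i) ^ 2) = 1 by
            rw [← hw1]; exact Finset.sum_congr rfl fun i _ => Real.sq_sqrt (hw i)]
          rw [one_mul]
          exact Finset.sum_congr rfl fun i _ => by
            rw [mul_pow, Real.sq_sqrt (hw i), sq_abs]
  calc ∑ i, w i * |f i| = Real.sqrt ((∑ i, w i * |f i|) ^ 2) := (Real.sqrt_sq hS).symm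
    _ ≤ Real.sqrt (∑ i, w i * f i ^ 2) := Real.sqrt_le_sqrt key

lemma sum_prod_fun {U : Type*} [Fintype U] {N : ℕ} (f : Fin N → U → ℝ) :
    ∑ a : Fin N → U, ∏ i, f i (a i) = ∏ i, ∑ u, f i u :=
  (Fintype.prod_sum f).symm

lemma exp_factor {U : Type*} [Fintype U] {N : ℕ} (p : Fin N → U → ℝ)
    (hp : ∀ i, ∑ u, p i u = 1) (s : Finset (Fin N)) (g : Fin N → U → ℝ) :
    ∑ a : Fin N → U, (∏ i, p i (a i)) * ∏ i ∈ s, g i (a i)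
      = ∏ i ∈ s, ∑ u, p i u * g i u := by
  have key : ∀ a : Fin N → U,
      (∏ i, p i (a i)) * ∏ i ∈ s, g i (a i)
        = ∏ i, (p i (a i) * if i ∈ s then g i (a i) else 1) := by
    intro a
    rw [Finset.prod_mul_distrib]
    congr 1
    rw [Finset.prod_ite_mem univ s (fun i => g i (a i)), Finset.univ_inter]
  rw [Finset.sum_congr rfl fun a _ => key a,
    sum_prod_fun (fun i u => p i u * if i ∈ s then g i u else 1)]
  have : ∀ i, (∑ u, p i u * if i ∈ s then g i u else 1)
      = if i ∈ s then ∑ u, p i u * g i u else 1 := by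
    intro i
    by_cases h : i ∈ s <;> simp [h, hp i]
  rw [Finset.prod_congr rfl fun i _ => this i,
    Finset.prod_ite_mem univ s (fun i => ∑ u, p i u * g i u), Finset.univ_inter]

lemma exp_one {U : Type*} [Fintype U] {N : ℕ} (p : Fin N → U → ℝ)
    (hp : ∀ i, ∑ u, p i u = 1) :
    ∑ a : Fin N → U, (∏ i, p i (a i)) = 1 := by
  have h := exp_factor p hp ∅ (fun _ _ => 1)
  simpa using h

lemma exp_single {U : Type*} [Fintype U] [DecidableEq U] {N : ℕ} (p : Fin N → U → ℝ)
    (hp : ∀ i, ∑ u, p i u = 1) (j : Fin N) (g : U → ℝ) :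
    ∑ a : Fin N → U, (∏ i, p i (a i)) * g (a j) = ∑ u, p j u * g u := by
  have h := exp_factor p hp {j} (fun _ u => g u)
  simpa using h

lemma exp_pair {U : Type*} [Fintype U] [DecidableEq U] {N : ℕ} (p : Fin N → U → ℝ)
    (hp : ∀ i, ∑ u, p i u = 1) {i j : Fin N} (hij : i ≠ j) (g h : U → ℝ) :
    ∑ a : Fin N → U, (∏ k, p k (a k)) * (g (a i) * h (a j))
      = (∑ u, p i u * g u) * (∑ u, p j u * h u) := by
  have key := exp_factor p hp {i, j} (fun k u => if k = i then g u else h u)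
  simp only [Finset.prod_pair hij, if_neg (Ne.symm hij)] at key
  simpa using key

lemma var_sum {U : Type*} [Fintype U] [DecidableEq U] {N : ℕ} (p : Fin N → U → ℝ)
    (hp : ∀ i, ∑ u, p i u = 1) (D : Fin N → U → ℝ)
    (hD : ∀ i, ∑ u, p i u * D i u = 0) :
    ∑ a : Fin N → U, (∏ i, p i (a i)) * (∑ i, D i (a i)) ^ 2
      = ∑ i, ∑ u, p i u * D i u ^ 2 := by
  have expand : ∀ a : Fin N → U,
      (∏ i, p i (a i)) * (∑ i, D i (a i)) ^ 2
        = ∑ i, ∑ j, (∏ k, p k (a k)) * (D i (a i) * D j (a j)) := by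
    intro a
    rw [sq, Finset.sum_mul_sum]
    rw [Finset.mul_sum]
    exact Finset.sum_congr rfl fun i _ => by rw [Finset.mul_sum]
  rw [Finset.sum_congr rfl fun a _ => expand a, Finset.sum_comm]
  refine Finset.sum_congr rfl fun i _ => ?_
  rw [Finset.sum_comm]
  rw [Finset.sum_eq_single i]
  · refine Eq.trans ?_ (exp_single p hp i fun u => D i u ^ 2)
    exact Finset.sum_congr rfl fun a _ => by rw [← sq]
  · intro j _ hji
    rw [exp_pair p hp (Ne.symm hji), hD i, zero_mul]
  · intro h; exact absurd (Finset.mem_univ i) h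

lemma emp_pmf {X : Type*} [Fintype X] [DecidableEq X] {N : ℕ} (hN : 0 < N)
    (s : Fin N → X) : IsPmf (emp s) := by
  have hNR : (0:ℝ) < N := by exact_mod_cast hN
  constructor
  · intro x
    refine div_nonneg (Finset.sum_nonneg fun i _ => ?_) hNR.le
    split <;> norm_num
  · simp only [emp]
    rw [← Finset.sum_div, Finset.sum_comm]
    have h1 : ∀ i ∈ (univ : Finset (Fin N)),
        (∑ x', if s i = x' then (1:ℝ) else 0) = 1 := fun i _ => by
      simp [Finset.sum_ite_eq]
    rw [Finset.sum_congr rfl h1, Finset.sum_const, Finset.card_univ, Fintype.card_fin,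
      nsmul_eq_mul, mul_one, div_self hNR.ne']

lemma emp_sum {X : Type*} [Fintype X] [DecidableEq X] {N : ℕ} (x : Fin N → X)
    (F : X → ℝ) : ∑ x', F x' * emp x x' = (∑ i, F (x i)) / N := by
  simp only [emp]
  have h1 : ∀ x', F x' * ((∑ i, if x i = x' then (1:ℝ) else 0) / N)
      = (∑ i, if x i = x' then F x' else 0) / N := by
    intro x'
    rw [← mul_div_assoc, Finset.mul_sum]
    congr 1
    exact Finset.sum_congr rfl fun i _ => by split <;> simp
  rw [Finset.sum_congr rfl fun x' _ => h1 x', ← Finset.sum_div, Finset.sum_comm]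
  congr 1
  exact Finset.sum_congr rfl fun i _ => by rw [Finset.sum_ite_eq]; simp

/-- The mean-field action distribution `ν^MF(μ, π)`. -/
noncomputable def nuMF {X U : Type*} [Fintype X] [Fintype U]
    (μ : X → ℝ) (π : X → (X → ℝ) → U → ℝ) : U → ℝ :=
  fun u => ∑ x, π x μ u * μ x

/-- The mean-field average reward `r^MF(μ, π)`. -/
noncomputable def rMF {X U : Type*} [Fintype X] [Fintype U]
    (r : X → U → (X → ℝ) → (U → ℝ) → ℝ)
    (μ : X → ℝ) (π : X → (X → ℝ) → U → ℝ) : ℝ :=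
  ∑ x, ∑ u, r x u μ (nuMF μ π) * π x μ u * μ x

/-- Lemma 6: conditioned on the joint state `x`, with actions sampled independently via
`π`, the expected deviation of the `N`-agent average reward from the mean-field reward
`r^MF(emp x, π)` is at most `M_R/√N + L_R √|U|/√N`.  The expectation is written out as
a sum over joint actions weighted by the product law. -/
theorem empirical_average_reward_bound
    {X U : Type*} [Fintype X] [Fintype U] [DecidableEq X] [DecidableEq U]
    (N : ℕ) (hN : 0 < N)
    (M_R L_R : ℝ) (hMR : 0 < M_R) (hLR : 0 < L_R)
    (r : X → U → (X → ℝ) → (U → ℝ) → ℝ)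
    (hbdd : ∀ x u μ ν, IsPmf μ → IsPmf ν → |r x u μ ν| ≤ M_R)
    (hrLip : ∀ x u μ₁ μ₂ ν₁ ν₂, IsPmf μ₁ → IsPmf μ₂ → IsPmf ν₁ → IsPmf ν₂ →
      |r x u μ₁ ν₁ - r x u μ₂ ν₂|
        ≤ L_R * (l1 (fun x' => μ₁ x' - μ₂ x') + l1 (fun u' => ν₁ u' - ν₂ u')))
    (π : X → (X → ℝ) → U → ℝ)
    (hπ : ∀ x μ, IsPmf μ → IsPmf (π x μ))
    (x : Fin N → X) :
    ∑ a : Fin N → U, (∏ i, π (x i) (emp x) (a i)) *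
        |(1 / N : ℝ) * ∑ i, r (x i) (a i) (emp x) (emp a) - rMF r (emp x) π|
      ≤ M_R / Real.sqrt N + L_R * Real.sqrt (Fintype.card U) / Real.sqrt N := by
  classical
  have hNR : (0:ℝ) < N := by exact_mod_cast hN
  set μ : X → ℝ := emp x with hμeq
  have hμ : IsPmf μ := emp_pmf hN x
  have hpPmf : ∀ i, IsPmf (π (x i) μ) := fun i => hπ (x i) μ hμ
  have hp1 : ∀ i, ∑ u, π (x i) μ u = 1 := fun i => (hpPmf i).2
  have hpnn : ∀ i u, 0 ≤ π (x i) μ u := fun i u => (hpPmf i).1 u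
  have hWnn : ∀ a : Fin N → U, 0 ≤ ∏ i, π (x i) μ (a i) :=
    fun a => Finset.prod_nonneg fun i _ => hpnn i (a i)
  have hW1 : ∑ a : Fin N → U, ∏ i, π (x i) μ (a i) = 1 :=
    exp_one (fun i => π (x i) μ) hp1
  have hν : IsPmf (nuMF μ π) := by
    constructor
    · intro u
      exact Finset.sum_nonneg fun x' _ => mul_nonneg ((hπ x' μ hμ).1 u) (hμ.1 x')
    · simp only [nuMF]
      rw [Finset.sum_comm]
      have h1 : ∀ x' ∈ (univ : Finset X), (∑ u, π x' μ u * μ x') = μ x' :=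
        fun x' _ => by rw [← Finset.sum_mul, (hπ x' μ hμ).2, one_mul]
      rw [Finset.sum_congr rfl h1]
      exact hμ.2
  -- empirical representation of nuMF
  have hν_emp : ∀ u, nuMF μ π u = (∑ i, π (x i) μ u) / N := by
    intro u
    rw [show nuMF μ π u = ∑ x', (fun x'' => π x'' μ u) x' * emp x x' from rfl,
      emp_sum x (fun x'' => π x'' μ u)]
  -- mean values
  set m : Fin N → ℝ := fun i => ∑ u, π (x i) μ u * r (x i) u μ (nuMF μ π) with hmeq
  have emp_sum' : ∀ F : X → ℝ, ∑ x', F x' * μ x' = (∑ i, F (x i)) / N := by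
    intro F; rw [hμeq]; exact emp_sum x F
  have hrMF : rMF r μ π = (∑ i, m i) / N := by
    have h1 : rMF r μ π
        = ∑ x', (fun x'' => ∑ u, r x'' u μ (nuMF μ π) * π x'' μ u) x' * μ x' := by
      simp only [rMF]
      exact Finset.sum_congr rfl fun x' _ => by rw [Finset.sum_mul]
    rw [h1, emp_sum']
    congr 1
    refine Finset.sum_congr rfl fun i _ => ?_
    simp only [hmeq]
    exact Finset.sum_congr rfl fun u _ => mul_comm _ _
  -- centered variables
  set Z : Fin N → U → ℝ := fun i u => r (x i) u μ (nuMF μ π) with hZeq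
  set D : Fin N → U → ℝ := fun i u => Z i u - m i with hDeq
  have hZbdd : ∀ i u, |Z i u| ≤ M_R := fun i u => hbdd (x i) u μ (nuMF μ π) hμ hν
  have hDcent : ∀ i, ∑ u, π (x i) μ u * D i u = 0 := by
    intro i
    simp only [hDeq, mul_sub, Finset.sum_sub_distrib]
    rw [← Finset.sum_mul, hp1 i, one_mul]
    simp only [hmeq]
    ring
  have hDvar : ∀ i, ∑ u, π (x i) μ u * D i u ^ 2 ≤ M_R ^ 2 := by
    intro i
    have hid : ∑ u, π (x i) μ u * D i u ^ 2
        = (∑ u, π (x i) μ u * Z i u ^ 2) - m i ^ 2 := by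
      have h2 : ∀ u, π (x i) μ u * D i u ^ 2
          = π (x i) μ u * Z i u ^ 2 - (2 * m i) * (π (x i) μ u * Z i u)
            + m i ^ 2 * π (x i) μ u := by
        intro u; simp only [hDeq]; ring
      rw [Finset.sum_congr rfl fun u _ => h2 u, Finset.sum_add_distrib,
        Finset.sum_sub_distrib, ← Finset.mul_sum, ← Finset.mul_sum, hp1 i, mul_one]
      have h3 : ∑ u, π (x i) μ u * Z i u = m i := by
        simp only [hmeq, hZeq]
      rw [h3]; ring
    have h1 : ∑ u, π (x i) μ u * Z i u ^ 2 ≤ M_R ^ 2 := by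
      calc ∑ u, π (x i) μ u * Z i u ^ 2 ≤ ∑ u, π (x i) μ u * M_R ^ 2 := by
            refine Finset.sum_le_sum fun u _ => ?_
            refine mul_le_mul_of_nonneg_left ?_ (hpnn i u)
            rw [← sq_abs]
            exact pow_le_pow_left₀ (abs_nonneg _) (hZbdd i u) 2
        _ = M_R ^ 2 := by rw [← Finset.sum_mul, hp1 i, one_mul]
    rw [hid]
    nlinarith [sq_nonneg (m i)]
  have helper : ∀ c : ℝ, (1/(N:ℝ)) * (Real.sqrt N * c) = c / Real.sqrt N := by
    intro c
    have hs : Real.sqrt N * Real.sqrt N = (N:ℝ) := Real.mul_self_sqrt hNR.le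
    rw [eq_div_iff (Real.sqrt_pos.mpr hNR).ne']
    field_simp
    linear_combination c * hs
  -- Part A : concentration of the mean-field-evaluated reward
  have hEA : ∑ a : Fin N → U, (∏ i, π (x i) μ (a i)) *
      |(1/N:ℝ) * ∑ i, Z i (a i) - rMF r μ π| ≤ M_R / Real.sqrt N := by
    have heq : ∀ a : Fin N → U, (1/N:ℝ) * ∑ i, Z i (a i) - rMF r μ π
        = (1/N) * ∑ i, D i (a i) := by
      intro a
      rw [hrMF]
      simp only [hDeq, Finset.sum_sub_distrib]
      ring
    calc ∑ a : Fin N → U, (∏ i, π (x i) μ (a i)) * |(1/N:ℝ) * ∑ i, Z i (a i) - rMF r μ π|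
        = (1/N) * ∑ a : Fin N → U, (∏ i, π (x i) μ (a i)) * |∑ i, D i (a i)| := by
          rw [Finset.mul_sum]
          refine Finset.sum_congr rfl fun a _ => ?_
          rw [heq a, abs_mul, abs_of_nonneg (by positivity : (0:ℝ) ≤ 1/(N:ℝ))]
          ring
      _ ≤ (1/N) * Real.sqrt (∑ a : Fin N → U,
            (∏ i, π (x i) μ (a i)) * (∑ i, D i (a i)) ^ 2) := by
          refine mul_le_mul_of_nonneg_left ?_ (by positivity)
          exact exp_abs_le_sqrt _ _ hWnn hW1
      _ = (1/N) * Real.sqrt (∑ i, ∑ u, π (x i) μ u * D i u ^ 2) := by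
          rw [var_sum (fun i => π (x i) μ) hp1 D hDcent]
      _ ≤ (1/N) * Real.sqrt (N * M_R ^ 2) := by
          refine mul_le_mul_of_nonneg_left (Real.sqrt_le_sqrt ?_) (by positivity)
          calc ∑ i, ∑ u, π (x i) μ u * D i u ^ 2 ≤ ∑ _i : Fin N, M_R ^ 2 :=
                Finset.sum_le_sum fun i _ => hDvar i
            _ = N * M_R ^ 2 := by
                rw [Finset.sum_const, Finset.card_univ, Fintype.card_fin, nsmul_eq_mul]
      _ = M_R / Real.sqrt N := by
          rw [Real.sqrt_mul hNR.le, Real.sqrt_sq hMR.le, helper]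
  -- Part B : concentration of the empirical action distribution
  have hEnu : ∀ u : U, ∑ a : Fin N → U, (∏ i, π (x i) μ (a i)) * |emp a u - nuMF μ π u|
      ≤ Real.sqrt (nuMF μ π u) / Real.sqrt N := by
    intro u
    set c : Fin N → U → ℝ := fun i v => (if v = u then (1:ℝ) else 0) - π (x i) μ u with hceq
    have hsum_ind : ∀ i, ∑ v, π (x i) μ v * (if v = u then (1:ℝ) else 0) = π (x i) μ u := by
      intro i
      simp [mul_ite]
    have hccent : ∀ i, ∑ v, π (x i) μ v * c i v = 0 := by
      intro i
      have h0 : ∑ v, π (x i) μ v * c i v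
          = (∑ v, π (x i) μ v * (if v = u then (1:ℝ) else 0))
            - (∑ v, π (x i) μ v) * π (x i) μ u := by
        rw [Finset.sum_mul, ← Finset.sum_sub_distrib]
        exact Finset.sum_congr rfl fun v _ => by simp only [hceq]; ring
      rw [h0, hsum_ind i, hp1 i, one_mul, sub_self]
    have hcvar : ∀ i, ∑ v, π (x i) μ v * c i v ^ 2 ≤ π (x i) μ u := by
      intro i
      have hind_sq : ∀ v : U, ((if v = u then (1:ℝ) else 0)) ^ 2
          = (if v = u then (1:ℝ) else 0) := by
        intro v; split <;> norm_num
      have hid : ∑ v, π (x i) μ v * c i v ^ 2 = π (x i) μ u - π (x i) μ u ^ 2 := by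
        have h2 : ∀ v, π (x i) μ v * c i v ^ 2
            = π (x i) μ v * (if v = u then (1:ℝ) else 0)
              - (2 * π (x i) μ u) * (π (x i) μ v * (if v = u then (1:ℝ) else 0))
              + π (x i) μ u ^ 2 * π (x i) μ v := by
          intro v
          simp only [hceq, sub_sq, hind_sq v]
          ring
        rw [Finset.sum_congr rfl fun v _ => h2 v, Finset.sum_add_distrib,
          Finset.sum_sub_distrib, ← Finset.mul_sum, ← Finset.mul_sum, hsum_ind i,
          hp1 i, mul_one]
        ring
      rw [hid]
      nlinarith [sq_nonneg (π (x i) μ u)]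
    have heq : ∀ a : Fin N → U, emp a u - nuMF μ π u = (1/N) * ∑ i, c i (a i) := by
      intro a
      rw [hν_emp u]
      simp only [hceq, emp, Finset.sum_sub_distrib]
      ring
    calc ∑ a : Fin N → U, (∏ i, π (x i) μ (a i)) * |emp a u - nuMF μ π u|
        = (1/N) * ∑ a : Fin N → U, (∏ i, π (x i) μ (a i)) * |∑ i, c i (a i)| := by
          rw [Finset.mul_sum]
          refine Finset.sum_congr rfl fun a _ => ?_
          rw [heq a, abs_mul, abs_of_nonneg (by positivity : (0:ℝ) ≤ 1/(N:ℝ))]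
          ring
      _ ≤ (1/N) * Real.sqrt (∑ a : Fin N → U,
            (∏ i, π (x i) μ (a i)) * (∑ i, c i (a i)) ^ 2) := by
          refine mul_le_mul_of_nonneg_left ?_ (by positivity)
          exact exp_abs_le_sqrt _ _ hWnn hW1
      _ = (1/N) * Real.sqrt (∑ i, ∑ v, π (x i) μ v * c i v ^ 2) := by
          rw [var_sum (fun i => π (x i) μ) hp1 c hccent]
      _ ≤ (1/N) * Real.sqrt (N * nuMF μ π u) := by
          refine mul_le_mul_of_nonneg_left (Real.sqrt_le_sqrt ?_) (by positivity)
          calc ∑ i, ∑ v, π (x i) μ v * c i v ^ 2 ≤ ∑ i, π (x i) μ u :=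
                Finset.sum_le_sum fun i _ => hcvar i
            _ = N * nuMF μ π u := by
                rw [hν_emp u]
                field_simp
      _ = Real.sqrt (nuMF μ π u) / Real.sqrt N := by
          rw [Real.sqrt_mul hNR.le, helper]
  -- sum over u of sqrt(nu) is at most sqrt(card U)
  have hsum_sqrt : ∑ u, Real.sqrt (nuMF μ π u) ≤ Real.sqrt (Fintype.card U) := by
    have hcs := Finset.sum_mul_sq_le_sq_mul_sq univ (fun _ : U => (1:ℝ))
        (fun u => Real.sqrt (nuMF μ π u))
    simp only [one_mul, one_pow] at hcs
    have h2 : (∑ u, Real.sqrt (nuMF μ π u)) ^ 2 ≤ (Fintype.card U : ℝ) := by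
      calc (∑ u, Real.sqrt (nuMF μ π u)) ^ 2
          ≤ (∑ _u : U, (1:ℝ)) * ∑ u, Real.sqrt (nuMF μ π u) ^ 2 := hcs
        _ = (Fintype.card U : ℝ) := by
            rw [Finset.sum_const, Finset.card_univ, nsmul_eq_mul, mul_one,
              Finset.sum_congr rfl fun u _ => Real.sq_sqrt (hν.1 u), hν.2, mul_one]
    calc ∑ u, Real.sqrt (nuMF μ π u)
        = Real.sqrt ((∑ u, Real.sqrt (nuMF μ π u)) ^ 2) :=
          (Real.sqrt_sq (Finset.sum_nonneg fun u _ => Real.sqrt_nonneg _)).symm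
      _ ≤ Real.sqrt (Fintype.card U) := Real.sqrt_le_sqrt h2
  have hEl1 : ∑ a : Fin N → U, (∏ i, π (x i) μ (a i)) * l1 (fun u => emp a u - nuMF μ π u)
      ≤ Real.sqrt (Fintype.card U) / Real.sqrt N := by
    calc ∑ a : Fin N → U, (∏ i, π (x i) μ (a i)) * l1 (fun u => emp a u - nuMF μ π u)
        = ∑ u, ∑ a : Fin N → U, (∏ i, π (x i) μ (a i)) * |emp a u - nuMF μ π u| := by
          rw [Finset.sum_comm]
          refine Finset.sum_congr rfl fun a _ => ?_
          rw [l1, Finset.mul_sum]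
      _ ≤ ∑ u, Real.sqrt (nuMF μ π u) / Real.sqrt N :=
          Finset.sum_le_sum fun u _ => hEnu u
      _ = (∑ u, Real.sqrt (nuMF μ π u)) / Real.sqrt N := by rw [Finset.sum_div]
      _ ≤ Real.sqrt (Fintype.card U) / Real.sqrt N :=
          (div_le_div_iff_of_pos_right (Real.sqrt_pos.mpr hNR)).mpr hsum_sqrt
  -- pointwise decomposition
  have hpt : ∀ a : Fin N → U,
      |(1/N:ℝ) * ∑ i, r (x i) (a i) μ (emp a) - rMF r μ π|
        ≤ L_R * l1 (fun u => emp a u - nuMF μ π u)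
          + |(1/N:ℝ) * ∑ i, Z i (a i) - rMF r μ π| := by
    intro a
    have hemp_a : IsPmf (emp a) := emp_pmf hN a
    refine le_trans (abs_sub_le _ ((1/N:ℝ) * ∑ i, Z i (a i)) _) (add_le_add_left ?_ _)
    have hd : (1/N:ℝ) * ∑ i, r (x i) (a i) μ (emp a) - (1/N:ℝ) * ∑ i, Z i (a i)
        = (1/N) * ∑ i, (r (x i) (a i) μ (emp a) - Z i (a i)) := by
      rw [Finset.sum_sub_distrib]; ring
    rw [hd, abs_mul, abs_of_nonneg (by positivity : (0:ℝ) ≤ 1/(N:ℝ))]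
    calc (1/(N:ℝ)) * |∑ i, (r (x i) (a i) μ (emp a) - Z i (a i))|
        ≤ (1/N) * ∑ i, |r (x i) (a i) μ (emp a) - Z i (a i)| :=
          mul_le_mul_of_nonneg_left (Finset.abs_sum_le_sum_abs _ _) (by positivity)
      _ ≤ (1/N) * ∑ _i : Fin N, L_R * l1 (fun u => emp a u - nuMF μ π u) := by
          refine mul_le_mul_of_nonneg_left (Finset.sum_le_sum fun i _ => ?_) (by positivity)
          have h := hrLip (x i) (a i) μ μ (emp a) (nuMF μ π) hμ hμ hemp_a hν
          have hz : l1 (fun x' => μ x' - μ x') = 0 := by simp [l1]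
          rw [hz, zero_add] at h
          simp only [hZeq]
          exact h
      _ = L_R * l1 (fun u => emp a u - nuMF μ π u) := by
          rw [Finset.sum_const, Finset.card_univ, Fintype.card_fin, nsmul_eq_mul,
            ← mul_assoc, one_div, inv_mul_cancel₀ hNR.ne', one_mul]
  -- combine everything
  calc ∑ a : Fin N → U, (∏ i, π (x i) μ (a i)) *
          |(1 / N : ℝ) * ∑ i, r (x i) (a i) μ (emp a) - rMF r μ π|
      ≤ ∑ a : Fin N → U, (∏ i, π (x i) μ (a i)) *
          (L_R * l1 (fun u => emp a u - nuMF μ π u)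
            + |(1/N:ℝ) * ∑ i, Z i (a i) - rMF r μ π|) :=
        Finset.sum_le_sum fun a _ => mul_le_mul_of_nonneg_left (hpt a) (hWnn a)
    _ = L_R * (∑ a : Fin N → U, (∏ i, π (x i) μ (a i)) * l1 (fun u => emp a u - nuMF μ π u))
        + ∑ a : Fin N → U, (∏ i, π (x i) μ (a i)) *
            |(1/N:ℝ) * ∑ i, Z i (a i) - rMF r μ π| := by
        simp only [mul_add]
        rw [Finset.sum_add_distrib]
        congr 1
        rw [Finset.mul_sum]
        exact Finset.sum_congr rfl fun a _ => by ring
    _ ≤ L_R * (Real.sqrt (Fintype.card U) / Real.sqrt N) + M_R / Real.sqrt N :=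
        add_le_add (mul_le_mul_of_nonneg_left hEl1 hLR.le) hEA
    _ = M_R / Real.sqrt N + L_R * Real.sqrt (Fintype.card U) / Real.sqrt N := by ring
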